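/- Let Y be a Banach space, C ∈ L(Y), and for each k ∈ ℤ let A(k), B(k) be linear operators in Y such that the composition B(k)[A(k)]^{−1}C =: E(k) is an everywhere-defined bounded operator with ‖E(k)‖ ≤ λ for a fixed λ ∈ (0,1). Let f : ℤ → Y be bounded. Define v(k) := −E(k)f(k) − ∑_{v=1}^{∞} E(k)E(k+1)⋯E(k+v) f(k+v) (absolutely convergent). Then, assuming in addition that each B(k) is injective, the sequence u(k) := [B(k)]^{−1} v(k) (whenever defined) gives a solution of the degenerate equation C B(k+1) u(k+1) = A(k) u(k) + C f(k) in the sense that v(k) = B(k)u(k) satisfies C v(k+1) ∈ A(k)[B(k)]^{−1} v(k) + C f(k) for all k ∈ ℤ. -/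

import Mathlib

/-- `fProd E k v = E(k) ∘ E(k+1) ∘ ⋯ ∘ E(k+v)`. -/
def fProd {Y : Type*} [NormedAddCommGroup Y] [NormedSpace ℂ Y]
    (E : ℤ → Y →L[ℂ] Y) (k : ℤ) : ℕ → (Y →L[ℂ] Y)
  | 0 => E k
  | v + 1 => fProd E k v ∘L E (k + ((v : ℤ) + 1))

lemma fProd_succ_left {Y : Type*} [NormedAddCommGroup Y] [NormedSpace ℂ Y]
    (E : ℤ → Y →L[ℂ] Y) (k : ℤ) (v : ℕ) :
    fProd E k (v + 1) = (E k) ∘L fProd E (k + 1) v := by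
  induction v with
  | zero =>
    show fProd E k 0 ∘L E (k + ((0 : ℤ) + 1)) = E k ∘L E (k + 1)
    norm_num [fProd]
  | succ v ih =>
    show fProd E k (v + 1) ∘L E (k + (((v : ℕ) + 1 : ℕ) + 1 : ℤ)) = _
    rw [ih]
    have : (k + (((v : ℕ) + 1 : ℕ) + 1 : ℤ)) = (k + 1) + ((v : ℤ) + 1) := by push_cast; ring
    rw [this]
    rfl

/-- Degenerate equations: let `A(k)`, `B(k)` be (possibly multivalued/unbounded) linear
operators in `Y` given by their graphs, `C ∈ L(Y)`, and suppose
`E(k) = B(k)[A(k)]⁻¹C ∈ L(Y)` with `‖E(k)‖ ≤ λ < 1`, in the sense that for every `x`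
there is `z` with `(z, C x) ∈ A(k)` and `(z, E(k) x) ∈ B(k)`; assume moreover each `B(k)`
is injective. If `f` is bounded, then
`v(k) = −E(k) f(k) − ∑_{v=1}^∞ E(k)⋯E(k+v) f(k+v)` (absolutely convergent) satisfies the
inclusion `C v(k+1) ∈ A(k)[B(k)]⁻¹ v(k) + C f(k)` for all `k ∈ ℤ`; that is, `v(k) = B(k)u(k)`
for a solution `u` of the degenerate equation `C B(k+1)u(k+1) = A(k)u(k) + C f(k)`. -/
theorem stmt19 {Y : Type*} [NormedAddCommGroup Y] [NormedSpace ℂ Y] [CompleteSpace Y]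
    (C : Y →L[ℂ] Y) (A B : ℤ → Submodule ℂ (Y × Y))
    (E : ℤ → Y →L[ℂ] Y)
    (hE : ∀ (k : ℤ) (x : Y), ∃ z : Y, ((z, C x) ∈ A k) ∧ ((z, E k x) ∈ B k))
    (hBinj : ∀ (k : ℤ) (z z' w : Y), (z, w) ∈ B k → (z', w) ∈ B k → z = z')
    (lam : ℝ) (hlam0 : 0 < lam) (hlam1 : lam < 1) (hElam : ∀ k : ℤ, ‖E k‖ ≤ lam)
    (f : ℤ → Y) (hf : ∃ M : ℝ, ∀ k : ℤ, ‖f k‖ ≤ M) :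
    (∀ k : ℤ, Summable (fun v : ℕ => ‖fProd E k (v + 1) (f (k + ((v : ℤ) + 1)))‖)) ∧
    (∀ k : ℤ, ∃ z w : Y,
      ((z, (fun m : ℤ =>
          -(E m (f m)) - ∑' v : ℕ, fProd E m (v + 1) (f (m + ((v : ℤ) + 1)))) k) ∈ B k) ∧
      ((z, w) ∈ A k) ∧
      C ((fun m : ℤ =>
          -(E m (f m)) - ∑' v : ℕ, fProd E m (v + 1) (f (m + ((v : ℤ) + 1)))) (k + 1))
        = w + C (f k)) := by
  obtain ⟨M, hM⟩ := hf
  have hM0 : (0 : ℝ) ≤ M := le_trans (norm_nonneg _) (hM 0)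
  have hlamn : ∀ (k : ℤ) (n : ℕ), ‖fProd E k n‖ ≤ lam ^ (n + 1) := by
    intro k n
    induction n with
    | zero => simpa [fProd] using hElam k
    | succ n ih =>
      calc ‖fProd E k (n + 1)‖ ≤ ‖fProd E k n‖ * ‖E (k + ((n : ℤ) + 1))‖ :=
            ContinuousLinearMap.opNorm_comp_le _ _
        _ ≤ lam ^ (n + 1) * lam :=
            mul_le_mul ih (hElam _) (norm_nonneg _) (pow_nonneg hlam0.le _)
        _ = lam ^ (n + 1 + 1) := (pow_succ _ _).symm
  -- general summability
  have key : ∀ (k : ℤ) (g : ℕ → ℤ),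
      Summable (fun v : ℕ => ‖fProd E k v (f (g v))‖) := by
    intro k g
    refine Summable.of_nonneg_of_le (fun v => norm_nonneg _) (fun v => ?_)
      (Summable.mul_right (lam * M) (summable_geometric_of_lt_one hlam0.le hlam1))
    calc ‖fProd E k v (f (g v))‖ ≤ ‖fProd E k v‖ * ‖f (g v)‖ :=
          ContinuousLinearMap.le_opNorm _ _
      _ ≤ lam ^ (v + 1) * M :=
          mul_le_mul (hlamn k v) (hM _) (norm_nonneg _)
            (pow_nonneg hlam0.le _)
      _ = lam ^ v * (lam * M) := by ring
  -- summability of shifted sequence (part 1)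
  have key1 : ∀ k : ℤ,
      Summable (fun v : ℕ => ‖fProd E k (v + 1) (f (k + ((v : ℤ) + 1)))‖) := by
    intro k
    have h := (summable_nat_add_iff 1).2 (key k (fun v => k + (v : ℤ)))
    convert h using 2 with v
    · rfl
    · rw [Nat.cast_succ]
  refine ⟨key1, fun k => ?_⟩
  -- summability in Y of the basic series at k+1
  have hsumT : Summable (fun v : ℕ => fProd E (k + 1) v (f ((k + 1) + (v : ℤ)))) :=
    Summable.of_norm (key (k + 1) (fun v => (k + 1) + (v : ℤ)))
  set T : Y := ∑' v : ℕ, fProd E (k + 1) v (f ((k + 1) + (v : ℤ))) with hT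
  set V : ℤ → Y := fun m : ℤ =>
    -(E m (f m)) - ∑' v : ℕ, fProd E m (v + 1) (f (m + ((v : ℤ) + 1))) with hV
  -- V k = E k (-(f k) - T)
  have hVk : V k = E k (-(f k) - T) := by
    have h1 : (∑' v : ℕ, fProd E k (v + 1) (f (k + ((v : ℤ) + 1))))
        = E k T := by
      rw [hT, ContinuousLinearMap.map_tsum _ hsumT]
      refine tsum_congr fun v => ?_
      rw [fProd_succ_left]
      have : k + ((v : ℤ) + 1) = (k + 1) + (v : ℤ) := by ring
      rw [this]
      rfl
    simp only [hV]
    rw [h1, map_sub, map_neg]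
  -- T = E(k+1) f(k+1) + ∑' shifted, so V (k+1) = -T
  have hVk1 : V (k + 1) = -T := by
    have h2 : T = E (k + 1) (f (k + 1))
        + ∑' v : ℕ, fProd E (k + 1) (v + 1) (f ((k + 1) + ((v : ℤ) + 1))) := by
      rw [hT, Summable.tsum_eq_zero_add hsumT]
      congr 1
      norm_num [fProd]
    simp only [hV]
    rw [h2]
    abel
  obtain ⟨z, hzA, hzB⟩ := hE k (-(f k) - T)
  refine ⟨z, C (-(f k) - T), ?_, hzA, ?_⟩
  · show (z, V k) ∈ B k
    rw [hVk]; exact hzB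
  · show C (V (k + 1)) = C (-(f k) - T) + C (f k)
    rw [hVk1, ← map_add]
    congr 1
    abel
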